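/- Let A be a commutative unital C*-algebra, let a, b ∈ A, define P(z) = (z - a)(z - b) and P'(z) = 2z - (a + b) for z ∈ A, and let c = (a + b)/2. Then for every z ∈ A, ‖P(z) - P(c)‖ ≤ (1/4) · ‖P'(z)‖². In particular, if ‖1‖ = 1 and z is not a critical point of P (so P'(z) ≠ 0), then, since the second derivative is P''(z) = 2·1, one has (‖P''(z)‖ / 2!) · ‖P(z) - P(c)‖ / ‖P'(z)‖² ≤ 1/4 ≤ 4^{2-1}, verifying the higher order C*-algebraic Smale mean value conjecture for k = 2 in degree 2. -/
import Mathlib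


/-- **Higher order C*-algebraic Smale mean value conjecture, `k = 2`, degree 2.**
For `P(z) = (z-a)(z-b)` over a commutative unital C*-algebra, with derivative
`P'(z) = 2z - (a+b)`, second derivative `P''(z) = 2·1`, and critical point `c = (a+b)/2`,
one has `‖P(z)-P(c)‖ ≤ (1/4) ‖P'(z)‖²` for every `z`; in particular, if `‖1‖ = 1` and `z` is
not a critical point of `P`, then `(‖P''(z)‖/2!) ‖P(z)-P(c)‖/‖P'(z)‖² ≤ 1/4 ≤ 4^{2-1}`. -/
theorem degree_two_higher_order_smale {A : Type*} [NormedCommRing A] [StarRing A]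
    [CStarRing A] [CompleteSpace A] [NormedAlgebra ℂ A] [StarModule ℂ A]
    (a b : A) (P P' P'' : A → A)
    (hP : ∀ z, P z = (z - a) * (z - b))
    (hP' : ∀ z, P' z = 2 * z - (a + b))
    (hP'' : ∀ z, P'' z = (2 : A) * 1)
    (c : A) (hc : c = (1 / 2 : ℂ) • (a + b)) (z : A) :
    ‖P z - P c‖ ≤ (1 / 4) * ‖P' z‖ ^ 2
    ∧ (‖(1 : A)‖ = 1 → P' z ≠ 0 →
        (‖P'' z‖ / (Nat.factorial 2 : ℝ)) * ‖P z - P c‖ / ‖P' z‖ ^ 2 ≤ 1 / 4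
        ∧ (1 / 4 : ℝ) ≤ 4 ^ (2 - 1)) := by
  have hab : a + b = c + c := by
    have : (2 : ℂ) • c = a + b := by
      rw [hc, smul_smul]; norm_num
    rw [← this, two_smul]
  have hkey : P z - P c = (z - c) * (z - c) := by
    rw [hP, hP]
    linear_combination (c - z) * hab
  have hP'z : P' z = (2 : ℂ) • (z - c) := by
    rw [hP', hab, two_smul]; ring
  have hnormP' : ‖P' z‖ = 2 * ‖z - c‖ := by
    rw [hP'z, norm_smul]; simp
  have h1 : ‖P z - P c‖ ≤ (1 / 4) * ‖P' z‖ ^ 2 := by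
    rw [hkey, hnormP']
    calc ‖(z - c) * (z - c)‖ ≤ ‖z - c‖ * ‖z - c‖ := norm_mul_le _ _
      _ ≤ 1 / 4 * (2 * ‖z - c‖) ^ 2 := by nlinarith [norm_nonneg (z - c)]
  refine ⟨h1, fun hone hne => ⟨?_, by norm_num⟩⟩
  have hP'pos : (0 : ℝ) < ‖P' z‖ := norm_pos_iff.mpr hne
  have hnorm2 : ‖P'' z‖ = 2 := by
    rw [hP'', mul_one]
    have : (2 : A) = (2 : ℂ) • (1 : A) := by
      rw [two_smul]; norm_num
    rw [this, norm_smul, hone]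
    simp
  rw [hnorm2]
  have : (Nat.factorial 2 : ℝ) = 2 := by norm_num [Nat.factorial]
  rw [this]
  rw [div_le_iff₀ (by positivity)]
  calc (2 : ℝ) / 2 * ‖P z - P c‖ = ‖P z - P c‖ := by ring
    _ ≤ 1 / 4 * ‖P' z‖ ^ 2 := h1
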